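/- For all integers i, k_1, k_2 with 1 ≤ i ≤ k_1 < k_2 ≤ n, the following identity holds in W: τ_{k_1}^{−i}·τ_{k_2}^{i} = ∏_{j_1=k_1}^{k_2−1} ( s_{j_1}·s_{j_1−1}⋯s_{j_1−i+1} ), where the outer product is taken in increasing order of j_1 and each inner block is the product s_{j_1}·s_{j_1−1}⋯s_{j_1−i+1} of i consecutive generators in decreasing index order. In particular the right-hand side is an element of the subgroup generated by {s_1, …, s_{n−1}}. -/
import Mathlib


/-- The Coxeter matrix of type `Bₙ`, with the bond of order `4` between the
generators of indices `0` and `1` (the paper's convention): `s_i² = 1`,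
`(s_0·s_1)⁴ = 1`, `(s_i·s_{i+1})³ = 1` for `1 ≤ i ≤ n-2`, and `(s_i·s_j)² = 1`
for `|i-j| ≥ 2`. -/
def BCoxeterMatrix (n : ℕ) : CoxeterMatrix (Fin n) where
  M := Matrix.of fun i j : Fin n ↦
    if i = j then 1
      else if ((i : ℕ) = 0 ∧ (j : ℕ) = 1) ∨ ((j : ℕ) = 0 ∧ (i : ℕ) = 1) then 4
      else if (j : ℕ) + 1 = i ∨ (i : ℕ) + 1 = j then 3 else 2
  isSymm := by unfold Matrix.IsSymm; aesop
  diagonal := by simp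
  off_diagonal := by aesop

variable {n : ℕ} {W : Type*} [Group W]

/-- The simple reflection `s_j` of the Coxeter system, for `0 ≤ j ≤ n-1`
(junk value `1` for `j ≥ n`). -/
def sgen (cs : CoxeterSystem (BCoxeterMatrix n) W) (j : ℕ) : W :=
  if h : j < n then cs.simple ⟨j, h⟩ else 1

/-- `tau cs k` is the element `τ_k = s_0 · s_1 ⋯ s_{k-1}` (with `τ_0 = 1`). -/
def tau (cs : CoxeterSystem (BCoxeterMatrix n) W) (k : ℕ) : W :=
  ((List.range k).map (sgen cs)).prod

/-- The parabolic subgroup `Ṡ_n` of `W` generated by `s_1, …, s_{n-1}`. -/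
def Sdot (cs : CoxeterSystem (BCoxeterMatrix n) W) : Subgroup W :=
  Subgroup.closure (cs.simple '' {j : Fin n | (j : ℕ) ≠ 0})

namespace BAux

variable (cs : CoxeterSystem (BCoxeterMatrix n) W)

lemma braid_of (s t : W) (hs : s * s = 1) (ht : t * t = 1) (h : (s * t) ^ 3 = 1) :
    s * t * s = t * s * t := by
  have h1 : (s * t * s) * (t * s * t) = 1 := by
    have e : (s * t * s) * (t * s * t) = (s * t) ^ 3 := by
      rw [pow_succ, pow_succ, pow_one]; simp only [mul_assoc]
    rw [e]; exact h
  calc s * t * s = (t * s * t)⁻¹ := eq_inv_of_mul_eq_one_left h1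
    _ = t⁻¹ * (s⁻¹ * t⁻¹) := by simp [mul_inv_rev, mul_assoc]
    _ = t * s * t := by
        rw [inv_eq_of_mul_eq_one_right hs, inv_eq_of_mul_eq_one_right ht, mul_assoc]

lemma comm_of (s t : W) (hs : s * s = 1) (ht : t * t = 1) (h : (s * t) ^ 2 = 1) :
    s * t = t * s := by
  have h1 : (s * t) * (s * t) = 1 := by rw [← pow_two]; exact h
  calc s * t = (s * t)⁻¹ := eq_inv_of_mul_eq_one_left h1
    _ = t⁻¹ * s⁻¹ := mul_inv_rev _ _
    _ = t * s := by rw [inv_eq_of_mul_eq_one_right hs, inv_eq_of_mul_eq_one_right ht]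

lemma sgen_mul_self (j : ℕ) : sgen cs j * sgen cs j = 1 := by
  unfold sgen; split
  · exact cs.simple_mul_simple_self _
  · simp

lemma sgen_inv (j : ℕ) : (sgen cs j)⁻¹ = sgen cs j :=
  inv_eq_of_mul_eq_one_right (sgen_mul_self cs j)

lemma sgen_comm {j m : ℕ} (h : j + 2 ≤ m) : Commute (sgen cs j) (sgen cs m) := by
  by_cases hm : m < n
  · have hj : j < n := by omega
    have hM : BCoxeterMatrix n ⟨j, hj⟩ ⟨m, hm⟩ = 2 := by
      show (Matrix.of _) _ _ = 2
      rw [Matrix.of_apply]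
      rw [if_neg, if_neg, if_neg] <;> simp [Fin.ext_iff] <;> omega
    have hp := cs.simple_mul_simple_pow ⟨j, hj⟩ ⟨m, hm⟩
    rw [hM] at hp
    have := comm_of (cs.simple ⟨j, hj⟩) (cs.simple ⟨m, hm⟩)
      (cs.simple_mul_simple_self _) (cs.simple_mul_simple_self _) hp
    unfold sgen
    rw [dif_pos hj, dif_pos hm]
    exact this
  · unfold sgen
    rw [dif_neg hm]
    exact Commute.one_right _

lemma sgen_braid {j : ℕ} (h1 : 1 ≤ j) (h2 : j + 1 < n) :
    sgen cs j * sgen cs (j + 1) * sgen cs j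
      = sgen cs (j + 1) * sgen cs j * sgen cs (j + 1) := by
  have hj : j < n := by omega
  have hM : BCoxeterMatrix n ⟨j, hj⟩ ⟨j + 1, h2⟩ = 3 := by
    show (Matrix.of _) _ _ = 3
    rw [Matrix.of_apply]
    rw [if_neg, if_neg, if_pos] <;> simp [Fin.ext_iff] <;> omega
  have hp := cs.simple_mul_simple_pow ⟨j, hj⟩ ⟨j + 1, h2⟩
  rw [hM] at hp
  have := braid_of (cs.simple ⟨j, hj⟩) (cs.simple ⟨j + 1, h2⟩)
    (cs.simple_mul_simple_self _) (cs.simple_mul_simple_self _) hp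
  unfold sgen
  rw [dif_pos hj, dif_pos h2]
  exact this

lemma tau_succ (k : ℕ) : tau cs (k + 1) = tau cs k * sgen cs k := by
  simp [tau, List.range_succ]

lemma tau_comm {j m : ℕ} (h : j + 1 ≤ m) : Commute (tau cs j) (sgen cs m) := by
  induction j with
  | zero => simpa [tau] using Commute.one_left _
  | succ j ih =>
    rw [tau_succ]
    exact Commute.mul_left (ih (by omega)) (sgen_comm cs (by omega))

/-- The block `s_k · s_{k-1} ⋯ s_{k-i+1}`. -/
def P (i k : ℕ) : W := ((List.range i).map (fun b => sgen cs (k - b))).prod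

lemma P_zero (k : ℕ) : P cs 0 k = 1 := rfl

lemma P_succ (i k : ℕ) : P cs (i + 1) k = sgen cs k * P cs i (k - 1) := by
  unfold P
  rw [List.range_succ_eq_map]
  simp only [List.map_cons, List.map_map, List.prod_cons, Nat.sub_zero]
  rw [show ((fun b => sgen cs (k - b)) ∘ Nat.succ) = fun b => sgen cs (k - 1 - b) by
    funext b; simp only [Function.comp_apply]; congr 1; omega]

lemma P_comm {i k m : ℕ} (h : k + 2 ≤ m) : Commute (P cs i k) (sgen cs m) := by
  induction i generalizing k with
  | zero => rw [P_zero]; exact Commute.one_left _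
  | succ i ih =>
    rw [P_succ]
    exact Commute.mul_left (sgen_comm cs h) (ih (by omega))

/-- `τ_k · s_{m+1} = s_{m+2} · τ_k` for `m + 3 ≤ k ≤ n`. -/
lemma semi_mid (m : ℕ) : ∀ k, m + 3 ≤ k → k ≤ n →
    tau cs k * sgen cs (m + 1) = sgen cs (m + 2) * tau cs k := by
  intro k
  induction k with
  | zero => omega
  | succ k ih =>
    intro hk hn
    rcases Nat.lt_or_ge (m + 3) (k + 1) with hlt | hge
    · -- step: k ≥ m + 3
      have hcomm : sgen cs k * sgen cs (m + 1) = sgen cs (m + 1) * sgen cs k :=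
        ((sgen_comm cs (show m + 1 + 2 ≤ k by omega)).symm).eq
      calc tau cs (k + 1) * sgen cs (m + 1)
          = tau cs k * (sgen cs k * sgen cs (m + 1)) := by rw [tau_succ, mul_assoc]
        _ = tau cs k * sgen cs (m + 1) * sgen cs k := by rw [hcomm, mul_assoc]
        _ = sgen cs (m + 2) * tau cs k * sgen cs k := by rw [ih (by omega) (by omega)]
        _ = sgen cs (m + 2) * tau cs (k + 1) := by rw [tau_succ, mul_assoc]
    · -- base: k = m + 2
      obtain rfl : k = m + 2 := by omega
      have hb : sgen cs (m + 1) * sgen cs (m + 2) * sgen cs (m + 1)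
          = sgen cs (m + 2) * sgen cs (m + 1) * sgen cs (m + 2) :=
        sgen_braid cs (by omega) (by omega)
      have hc : tau cs (m + 1) * sgen cs (m + 2) = sgen cs (m + 2) * tau cs (m + 1) :=
        (tau_comm cs (by omega)).eq
      calc tau cs (m + 2 + 1) * sgen cs (m + 1)
          = tau cs (m + 1) * (sgen cs (m + 1) * sgen cs (m + 2) * sgen cs (m + 1)) := by
            rw [tau_succ cs (m + 2), tau_succ cs (m + 1)]; simp only [mul_assoc]
        _ = tau cs (m + 1) * (sgen cs (m + 2) * sgen cs (m + 1) * sgen cs (m + 2)) := by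
            rw [hb]
        _ = tau cs (m + 1) * sgen cs (m + 2) * (sgen cs (m + 1) * sgen cs (m + 2)) := by
            simp only [mul_assoc]
        _ = sgen cs (m + 2) * (tau cs (m + 1) * (sgen cs (m + 1) * sgen cs (m + 2))) := by
            rw [hc, mul_assoc]
        _ = sgen cs (m + 2) * tau cs (m + 2 + 1) := by
            rw [tau_succ cs (m + 2), tau_succ cs (m + 1)]; simp only [mul_assoc]

/-- `τ_{k+1} · (s_k s_{k+1} s_k) = s_{k+1} · τ_{k+1}`. -/
lemma semi_top (k : ℕ) :
    tau cs (k + 1) * (sgen cs k * sgen cs (k + 1) * sgen cs k)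
      = sgen cs (k + 1) * tau cs (k + 1) := by
  have hc : tau cs k * sgen cs (k + 1) = sgen cs (k + 1) * tau cs k :=
    (tau_comm cs (by omega)).eq
  calc tau cs (k + 1) * (sgen cs k * sgen cs (k + 1) * sgen cs k)
      = tau cs k * (sgen cs k * sgen cs k) * (sgen cs (k + 1) * sgen cs k) := by
        rw [tau_succ]; simp only [mul_assoc]
    _ = tau cs k * sgen cs (k + 1) * sgen cs k := by
        rw [sgen_mul_self, mul_one, mul_assoc]
    _ = sgen cs (k + 1) * tau cs (k + 1) := by rw [hc, tau_succ, mul_assoc]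

/-- `τ_k · P(m, r) = P(m, r+1) · τ_k` for `m ≤ r`, `r + 2 ≤ k ≤ n`. -/
lemma semi_P (m : ℕ) : ∀ r k, m ≤ r → r + 2 ≤ k → k ≤ n →
    tau cs k * P cs m r = P cs m (r + 1) * tau cs k := by
  induction m with
  | zero => intro r k _ _ _; rw [P_zero, P_zero, mul_one, one_mul]
  | succ m ih =>
    intro r k hmr hrk hkn
    have hr1 : 1 ≤ r := by omega
    have hs : tau cs k * sgen cs r = sgen cs (r + 1) * tau cs k := by
      have := semi_mid cs (r - 1) k (by omega) hkn
      rwa [show r - 1 + 1 = r by omega, show r - 1 + 2 = r + 1 by omega] at this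
    rw [P_succ, P_succ, ← mul_assoc, hs, mul_assoc,
      ih (r - 1) k (by omega) (by omega) hkn,
      show r - 1 + 1 = r by omega, show r + 1 - 1 = r by omega, ← mul_assoc]

/-- Key lemma: `τ_k^{-i} · τ_{k+1}^i = P(i, k)` for `i ≤ k`, `k + 1 ≤ n`. -/
lemma key (i : ℕ) : ∀ k, i ≤ k → k + 1 ≤ n →
    (tau cs k)⁻¹ ^ i * tau cs (k + 1) ^ i = P cs i k := by
  induction i with
  | zero => intro k _ _; simp [P_zero]
  | succ i ih =>
    intro k hik hkn
    have hexp : (tau cs k)⁻¹ ^ (i + 1) * tau cs (k + 1) ^ (i + 1)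
        = (tau cs k)⁻¹ * ((tau cs k)⁻¹ ^ i * tau cs (k + 1) ^ i) * tau cs (k + 1) := by
      rw [pow_succ', pow_succ]; simp only [mul_assoc]
    rw [hexp, ih k (by omega) hkn, tau_succ]
    rcases Nat.eq_zero_or_pos i with hi0 | hi1
    · subst hi0
      rw [P_zero, mul_one, inv_mul_cancel_left]
      simp [P, List.range_succ]
    · obtain ⟨m, rfl⟩ : ∃ m, i = m + 1 := ⟨i - 1, by omega⟩
      obtain ⟨k', rfl⟩ : ∃ k', k = k' + 1 := ⟨k - 1, by omega⟩
      rw [P_succ, show k' + 1 - 1 = k' by omega]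
      have htop : (tau cs (k' + 1))⁻¹ * sgen cs (k' + 1) * tau cs (k' + 1)
          = sgen cs k' * sgen cs (k' + 1) * sgen cs k' := by
        rw [mul_assoc, ← semi_top cs k', ← mul_assoc, inv_mul_cancel, one_mul]
      have hmidP : (tau cs (k' + 1))⁻¹ * P cs m k' * tau cs (k' + 1) = P cs m (k' - 1) := by
        have h := semi_P cs m (k' - 1) (k' + 1) (by omega) (by omega) (by omega)
        rw [show k' - 1 + 1 = k' by omega] at h
        rw [mul_assoc, ← h, ← mul_assoc, inv_mul_cancel, one_mul]
      calc (tau cs (k' + 1))⁻¹ * (sgen cs (k' + 1) * P cs m k')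
            * (tau cs (k' + 1) * sgen cs (k' + 1))
          = ((tau cs (k' + 1))⁻¹ * sgen cs (k' + 1) * tau cs (k' + 1))
            * ((tau cs (k' + 1))⁻¹ * P cs m k' * tau cs (k' + 1)) * sgen cs (k' + 1) := by
            simp only [mul_assoc, mul_inv_cancel_left, inv_mul_cancel_left]
        _ = (sgen cs k' * sgen cs (k' + 1) * sgen cs k') * P cs m (k' - 1)
            * sgen cs (k' + 1) := by rw [htop, hmidP]
        _ = (sgen cs k' * sgen cs (k' + 1) * sgen cs k') * sgen cs (k' + 1)
            * P cs m (k' - 1) := by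
            rw [mul_assoc, (P_comm cs (show k' - 1 + 2 ≤ k' + 1 by omega)).eq, ← mul_assoc]
        _ = (sgen cs (k' + 1) * sgen cs k' * sgen cs (k' + 1)) * sgen cs (k' + 1)
            * P cs m (k' - 1) := by rw [sgen_braid cs (by omega) (by omega)]
        _ = sgen cs (k' + 1) * (sgen cs k' * P cs m (k' - 1)) := by
            simp only [mul_assoc, sgen_mul_self, mul_one]
        _ = sgen cs (k' + 1) * P cs (m + 1) (k' + 1 - 1) := by
            rw [P_succ cs m (k' + 1 - 1), show k' + 1 - 1 = k' by omega]
        _ = P cs (m + 1 + 1) (k' + 1) := by rw [P_succ cs (m + 1) (k' + 1)]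

/-- Telescoping. -/
lemma teles (i k₁ k₂ : ℕ) (h1 : k₁ ≤ k₂) (h2 : i ≤ k₁) (h3 : k₂ ≤ n) :
    (tau cs k₁)⁻¹ ^ i * tau cs k₂ ^ i
      = ((List.range (k₂ - k₁)).map (fun a => P cs i (k₁ + a))).prod := by
  induction k₂, h1 using Nat.le_induction with
  | base => simp [inv_pow]
  | succ k₂ hk ih =>
    have hmid : (tau cs k₁)⁻¹ ^ i * tau cs (k₂ + 1) ^ i
        = ((tau cs k₁)⁻¹ ^ i * tau cs k₂ ^ i)
          * ((tau cs k₂)⁻¹ ^ i * tau cs (k₂ + 1) ^ i) := by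
      simp only [inv_pow, mul_assoc, mul_inv_cancel_left]
    rw [hmid, ih (by omega), key cs i k₂ (by omega) h3,
      show k₂ + 1 - k₁ = (k₂ - k₁) + 1 by omega, List.range_succ, List.map_append,
      List.prod_append]
    simp only [List.map_cons, List.map_nil, List.prod_cons, List.prod_nil, mul_one]
    rw [show k₁ + (k₂ - k₁) = k₂ by omega]

lemma sgen_mem {j : ℕ} (h : 1 ≤ j) : sgen cs j ∈ Sdot cs := by
  unfold sgen; split
  · next h' =>
    exact Subgroup.subset_closure ⟨⟨j, h'⟩, by simpa using (by omega : j ≠ 0), rfl⟩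
  · exact one_mem _

end BAux

/-- `τ_{k_1}^{-i} · τ_{k_2}^{i} = ∏_{j_1=k_1}^{k_2-1} (s_{j_1} · s_{j_1-1} ⋯ s_{j_1-i+1})`
for `1 ≤ i ≤ k_1 < k_2 ≤ n`; in particular this element lies in the subgroup
generated by `s_1, …, s_{n-1}`. -/
theorem tau_zpow_neg_mul_tau_zpow (cs : CoxeterSystem (BCoxeterMatrix n) W)
    (i k₁ k₂ : ℕ) (hi : 1 ≤ i) (hik : i ≤ k₁) (hk : k₁ < k₂) (hk₂ : k₂ ≤ n) :
    tau cs k₁ ^ (-(i : ℤ)) * tau cs k₂ ^ (i : ℤ) =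
      ((List.range (k₂ - k₁)).map (fun a =>
        ((List.range i).map (fun b => sgen cs (k₁ + a - b))).prod)).prod ∧
    tau cs k₁ ^ (-(i : ℤ)) * tau cs k₂ ^ (i : ℤ) ∈ Sdot cs := by
  have hmain : tau cs k₁ ^ (-(i : ℤ)) * tau cs k₂ ^ (i : ℤ) =
      ((List.range (k₂ - k₁)).map (fun a =>
        ((List.range i).map (fun b => sgen cs (k₁ + a - b))).prod)).prod := by
    have := BAux.teles cs i k₁ k₂ (le_of_lt hk) hik hk₂
    rw [zpow_neg, zpow_natCast, zpow_natCast, ← inv_pow]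
    exact this
  refine ⟨hmain, ?_⟩
  rw [hmain]
  apply Subgroup.list_prod_mem
  intro x hx
  obtain ⟨a, _, rfl⟩ := List.mem_map.mp hx
  apply Subgroup.list_prod_mem
  intro y hy
  obtain ⟨b, hb, rfl⟩ := List.mem_map.mp hy
  rw [List.mem_range] at hb
  exact BAux.sgen_mem cs (by omega)
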